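/- arXiv:1909.03431 — 2 statements merged into one kernel-verified Lean document; each statement's English description precedes it below -/
import Mathlib

section
/- For any finite sequence of positive integers a₁, …, aₙ, the Gauss measure of the cylinder set of [a₁, a₂, …, aₙ] equals the Gauss measure of the cylinder set of the reversed sequence [aₙ, aₙ₋₁, …, a₁]. -/
open MeasureTheory Filter

noncomputable def gaussMap (x : ℝ) : ℝ := Int.fract x⁻¹

noncomputable def gaussMeasure : Measure ℝ :=
  (volume.restrict (Set.Ioo (0:ℝ) 1)).withDensity
    (fun x => ENNReal.ofReal (1 / ((1 + x) * Real.log 2)))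

noncomputable def cfDigit (x : ℝ) (i : ℕ) : ℕ := ⌊(gaussMap^[i] x)⁻¹⌋₊

def cylinder (w : List ℕ) : Set ℝ :=
  {x | x ∈ Set.Ioo (0:ℝ) 1 ∧ ∀ i < w.length, cfDigit x i = w.getD i 0}

noncomputable def blockCount (x : ℝ) (m : ℕ) (s : List ℕ) (N : ℕ) : ℕ :=
  Nat.card {i : ℕ // i ≤ N ∧ (gaussMap^[m * i] x) ∈ cylinder s}

def CFNormal (x : ℝ) : Prop :=
  ∀ s : List ℕ, s ≠ [] → (∀ a ∈ s, 0 < a) →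
    Tendsto (fun n : ℕ => (blockCount x 1 s n : ℝ) / n) atTop
      (nhds (gaussMeasure (cylinder s)).toReal)

def cfVal : List ℕ → ℚ
  | [] => 0
  | a :: t => 1 / (a + cfVal t)

def cfQ (a : ℕ → ℕ) : ℕ → ℕ
  | 0 => 0
  | 1 => 1
  | (m+2) => a (m+1) * cfQ a (m+1) + cfQ a m

def cfP (a : ℕ → ℕ) : ℕ → ℕ
  | 0 => 1
  | 1 => 0
  | (m+2) => a (m+1) * cfP a (m+1) + cfP a m

/-! ### Auxiliary development -/

open Matrix Set

def cfMat (w : List ℕ) : Matrix (Fin 2) (Fin 2) ℕ :=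
  (w.map (fun a => !![0,1;1,a])).prod

lemma cfMat_nil : cfMat [] = 1 := by simp [cfMat]

lemma cfMat_cons (a : ℕ) (w : List ℕ) : cfMat (a :: w) = !![0,1;1,a] * cfMat w := by
  simp [cfMat]

lemma cfMat_cons00 (a : ℕ) (w : List ℕ) : cfMat (a :: w) 0 0 = cfMat w 1 0 := by
  rw [cfMat_cons]; simp [Matrix.mul_apply, Fin.sum_univ_two]

lemma cfMat_cons01 (a : ℕ) (w : List ℕ) : cfMat (a :: w) 0 1 = cfMat w 1 1 := by
  rw [cfMat_cons]; simp [Matrix.mul_apply, Fin.sum_univ_two]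

lemma cfMat_cons10 (a : ℕ) (w : List ℕ) :
    cfMat (a :: w) 1 0 = cfMat w 0 0 + a * cfMat w 1 0 := by
  rw [cfMat_cons]; simp [Matrix.mul_apply, Fin.sum_univ_two]

lemma cfMat_cons11 (a : ℕ) (w : List ℕ) :
    cfMat (a :: w) 1 1 = cfMat w 0 1 + a * cfMat w 1 1 := by
  rw [cfMat_cons]; simp [Matrix.mul_apply, Fin.sum_univ_two]

lemma cfMat_reverse (w : List ℕ) : cfMat w.reverse = (cfMat w)ᵀ := by
  unfold cfMat
  rw [Matrix.transpose_list_prod, List.map_map]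
  have : (Matrix.transpose ∘ fun a : ℕ => !![0,1;1,a]) = fun a : ℕ => !![0,1;1,a] := by
    funext a; ext i j; fin_cases i <;> fin_cases j <;> simp
  rw [this, ← List.map_reverse]

lemma cfMat_bounds (w : List ℕ) (hw : ∀ a ∈ w, 0 < a) :
    cfMat w 0 1 ≤ cfMat w 1 1 ∧
      cfMat w 0 0 + cfMat w 0 1 ≤ cfMat w 1 0 + cfMat w 1 1 ∧ 1 ≤ cfMat w 1 1 := by
  induction w with
  | nil => simp [cfMat_nil, Matrix.one_apply]
  | cons a w ih =>
    have ha : 1 ≤ a := hw a List.mem_cons_self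
    obtain ⟨h1, h2, h3⟩ := ih (fun b hb => hw b (List.mem_cons_of_mem a hb))
    refine ⟨?_, ?_, ?_⟩ <;>
      simp only [cfMat_cons00, cfMat_cons01, cfMat_cons10, cfMat_cons11] <;> nlinarith

noncomputable def fv (w : List ℕ) (t : ℝ) : ℝ :=
  ((cfMat w 0 0 : ℝ) * t + (cfMat w 0 1 : ℝ)) /
    ((cfMat w 1 0 : ℝ) * t + (cfMat w 1 1 : ℝ))

lemma fv_nil (t : ℝ) : fv [] t = t := by
  simp [fv, cfMat_nil, Matrix.one_apply]

lemma fv_den_pos (w : List ℕ) (hw : ∀ a ∈ w, 0 < a) {t : ℝ} (ht : 0 ≤ t) :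
    0 < (cfMat w 1 0 : ℝ) * t + (cfMat w 1 1 : ℝ) := by
  obtain ⟨-, -, h3⟩ := cfMat_bounds w hw
  have : (1 : ℝ) ≤ (cfMat w 1 1 : ℝ) := by exact_mod_cast h3
  have : (0:ℝ) ≤ (cfMat w 1 0 : ℝ) * t := by positivity
  linarith

lemma fv_nonneg (w : List ℕ) (hw : ∀ a ∈ w, 0 < a) {t : ℝ} (ht : 0 ≤ t) :
    0 ≤ fv w t := by
  apply div_nonneg _ (fv_den_pos w hw ht).le
  positivity

lemma fv_le_one (w : List ℕ) (hw : ∀ a ∈ w, 0 < a) {t : ℝ} (ht : t ∈ Icc (0:ℝ) 1) :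
    fv w t ≤ 1 := by
  obtain ⟨h1, h2, h3⟩ := cfMat_bounds w hw
  rw [fv, div_le_one (fv_den_pos w hw ht.1)]
  have h1' : (cfMat w 0 1 : ℝ) ≤ (cfMat w 1 1 : ℝ) := by exact_mod_cast h1
  have h2' : (cfMat w 0 0 : ℝ) + (cfMat w 0 1 : ℝ) ≤ (cfMat w 1 0 : ℝ) + (cfMat w 1 1 : ℝ) := by
    exact_mod_cast h2
  nlinarith [ht.1, ht.2, mul_nonneg (sub_nonneg.mpr ht.2) (sub_nonneg.mpr h1'),
    mul_nonneg ht.1 (sub_nonneg.mpr h2')]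

lemma fv_cons (a : ℕ) (w : List ℕ) (hw : ∀ a ∈ w, 0 < a) (ha : 0 < a) {t : ℝ} (ht : 0 ≤ t) :
    fv (a :: w) t = 1 / ((a : ℝ) + fv w t) := by
  have hden : 0 < (cfMat w 1 0 : ℝ) * t + (cfMat w 1 1 : ℝ) := fv_den_pos w hw ht
  have hfv : 0 ≤ fv w t := fv_nonneg w hw ht
  have ha' : (1:ℝ) ≤ (a:ℝ) := by exact_mod_cast ha
  have hpos : 0 < (a : ℝ) + fv w t := by linarith
  rw [fv, cfMat_cons00, cfMat_cons01, cfMat_cons10, cfMat_cons11, fv] at *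
  push_cast
  rw [div_eq_div_iff (by push_cast at hden ⊢; nlinarith) (by positivity)]
  field_simp
  ring

lemma gaussMap_irr {x : ℝ} (hx : Irrational x) : Irrational (gaussMap x) := by
  unfold gaussMap Int.fract
  exact hx.inv.sub_intCast _

lemma gaussMap_mem_Ioo {x : ℝ} (hx : Irrational x) : gaussMap x ∈ Set.Ioo (0:ℝ) 1 := by
  have hirr : Irrational (gaussMap x) := gaussMap_irr hx
  refine ⟨lt_of_le_of_ne (Int.fract_nonneg _) ?_, Int.fract_lt_one _⟩
  intro h
  exact hirr.ne_int 0 (by simpa using h.symm)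

lemma cylinder_cons {a : ℕ} {w : List ℕ} {x : ℝ} (hx : Irrational x) :
    x ∈ cylinder (a :: w) ↔
      x ∈ Set.Ioo (0:ℝ) 1 ∧ ⌊x⁻¹⌋₊ = a ∧ gaussMap x ∈ cylinder w := by
  constructor
  · rintro ⟨hIoo, hd⟩
    have h0 : cfDigit x 0 = a := by simpa using hd 0 (by simp)
    refine ⟨hIoo, by simpa [cfDigit] using h0, gaussMap_mem_Ioo hx, fun i hi => ?_⟩
    have := hd (i+1) (by simpa using Nat.succ_lt_succ hi)
    simpa [cfDigit, Function.iterate_succ_apply] using this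
  · rintro ⟨hIoo, h0, hg, hrest⟩
    refine ⟨hIoo, fun i hi => ?_⟩
    cases i with
    | zero => simpa [cfDigit] using h0
    | succ i =>
      have hi' : i < w.length := by simpa using hi
      have := hrest i hi'
      simpa [cfDigit, Function.iterate_succ_apply] using this

lemma mem_uIoo' {a b x : ℝ} : x ∈ Set.uIoo a b ↔ (a < x ∧ x < b) ∨ (b < x ∧ x < a) := by
  rcases le_total a b with h | h
  · rw [Set.uIoo_of_le h, Set.mem_Ioo]
    refine ⟨Or.inl, ?_⟩
    rintro (⟨h1, h2⟩ | ⟨h1, h2⟩)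
    · exact ⟨h1, h2⟩
    · exact ⟨by linarith, by linarith⟩
  · rw [Set.uIoo_comm, Set.uIoo_of_le h, Set.mem_Ioo]
    refine ⟨Or.inr, ?_⟩
    rintro (⟨h1, h2⟩ | ⟨h1, h2⟩)
    · exact ⟨by linarith, by linarith⟩
    · exact ⟨h1, h2⟩

lemma mem_cylinder_iff (w : List ℕ) (hw : ∀ a ∈ w, 0 < a) {x : ℝ} (hx : Irrational x) :
    x ∈ cylinder w ↔ x ∈ Set.uIoo (fv w 0) (fv w 1) := by
  induction w generalizing x with
  | nil =>
    simp only [fv_nil]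
    rw [Set.uIoo_of_le zero_le_one]
    simp [_root_.cylinder, Set.mem_Ioo]
  | cons a w ih =>
    have ha : 0 < a := hw a List.mem_cons_self
    have ha1 : (1:ℝ) ≤ (a:ℝ) := by exact_mod_cast ha
    have hw' : ∀ b ∈ w, 0 < b := fun b hb => hw b (List.mem_cons_of_mem a hb)
    set α := fv w 0 with hα
    set β := fv w 1 with hβ
    have hα0 : 0 ≤ α := fv_nonneg w hw' le_rfl
    have hα1 : α ≤ 1 := fv_le_one w hw' ⟨le_rfl, zero_le_one⟩
    have hβ0 : 0 ≤ β := fv_nonneg w hw' zero_le_one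
    have hβ1 : β ≤ 1 := fv_le_one w hw' ⟨zero_le_one, le_rfl⟩
    have hfv0 : fv (a :: w) 0 = 1 / ((a:ℝ) + α) := fv_cons a w hw' ha le_rfl
    have hfv1 : fv (a :: w) 1 = 1 / ((a:ℝ) + β) := fv_cons a w hw' ha zero_le_one
    have haα : (0:ℝ) < (a:ℝ) + α := by linarith
    have haβ : (0:ℝ) < (a:ℝ) + β := by linarith
    rw [cylinder_cons hx, hfv0, hfv1]
    constructor
    · rintro ⟨hIoo, hd, hcyl⟩
      have hx0 : (0:ℝ) < x := hIoo.1
      have hinv1 : (1:ℝ) < x⁻¹ := (one_lt_inv₀ hx0).mpr hIoo.2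
      have hfl : (⌊x⁻¹⌋ : ℤ) = (a : ℤ) := by
        rw [Int.floor_eq_iff]
        have := (Nat.floor_eq_iff (by positivity)).mp hd
        exact_mod_cast this
      have hgm : gaussMap x = x⁻¹ - (a:ℝ) := by
        unfold gaussMap Int.fract; rw [hfl]; push_cast; ring
      have hy : gaussMap x ∈ Set.uIoo α β := (ih hw' (gaussMap_irr hx)).mp hcyl
      have hxval : x = 1 / ((a:ℝ) + gaussMap x) := by
        rw [hgm]
        have h' : (a:ℝ) + (x⁻¹ - (a:ℝ)) = x⁻¹ := by ring
        rw [h', one_div, inv_inv]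
      rw [mem_uIoo'] at hy ⊢
      rcases hy with ⟨h1, h2⟩ | ⟨h1, h2⟩
      · right
        refine ⟨?_, ?_⟩ <;> rw [hxval] <;>
          exact one_div_lt_one_div_of_lt (by linarith) (by linarith)
      · left
        refine ⟨?_, ?_⟩ <;> rw [hxval] <;>
          exact one_div_lt_one_div_of_lt (by linarith) (by linarith)
    · intro hmem
      rw [mem_uIoo'] at hmem
      -- From either disjunct, x is strictly between 1/(a+1+?) bounds; derive x⁻¹ ∈ (a+min, a+max)
      have key : ∃ y : ℝ, x = 1 / ((a:ℝ) + y) ∧ y ∈ Set.uIoo α β ∧ y = x⁻¹ - (a:ℝ) := by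
        have hx0 : 0 < x := by
          rcases hmem with ⟨h1, -⟩ | ⟨h1, -⟩
          · exact lt_trans (by positivity) h1
          · exact lt_trans (by positivity) h1
        refine ⟨x⁻¹ - (a:ℝ), ?_, ?_, rfl⟩
        · have h' : (a:ℝ) + (x⁻¹ - (a:ℝ)) = x⁻¹ := by ring
          rw [h', one_div, inv_inv]
        rw [mem_uIoo']
        rcases hmem with ⟨h1, h2⟩ | ⟨h1, h2⟩
        · right
          have hb1 : (a:ℝ) + β < x⁻¹ := by
            rw [← one_div x]
            have := one_div_lt_one_div_of_lt (by positivity : (0:ℝ) < x) h2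
            rwa [one_div_one_div] at this
          have hb2 : x⁻¹ < (a:ℝ) + α := by
            have := one_div_lt_one_div_of_lt (by positivity : (0:ℝ) < 1 / ((a:ℝ) + α)) h1
            rwa [one_div_one_div, one_div] at this
          constructor <;> linarith
        · left
          have hb1 : (a:ℝ) + α < x⁻¹ := by
            rw [← one_div x]
            have := one_div_lt_one_div_of_lt (by positivity : (0:ℝ) < x) h2
            rwa [one_div_one_div] at this
          have hb2 : x⁻¹ < (a:ℝ) + β := by
            have := one_div_lt_one_div_of_lt (by positivity : (0:ℝ) < 1 / ((a:ℝ) + β)) h1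
            rwa [one_div_one_div, one_div] at this
          constructor <;> linarith
      obtain ⟨y, hxy, hyu, hydef⟩ := key
      have hymem : y ∈ Set.Ioo (0:ℝ) 1 := by
        rw [mem_uIoo'] at hyu
        rcases hyu with ⟨h1, h2⟩ | ⟨h1, h2⟩
        · exact ⟨lt_of_le_of_lt hα0 h1, lt_of_lt_of_le h2 hβ1⟩
        · exact ⟨lt_of_le_of_lt hβ0 h1, lt_of_lt_of_le h2 hα1⟩
      have hxIoo : x ∈ Set.Ioo (0:ℝ) 1 := by
        have hay : 0 < (a:ℝ) + y := by linarith [hymem.1]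
        rw [hxy]
        exact ⟨one_div_pos.mpr hay, by rw [div_lt_one hay]; linarith [hymem.1]⟩
      have hyirr : Irrational y := by
        rw [hydef]; exact hx.inv.sub_natCast a
      have hinv : x⁻¹ = (a:ℝ) + y := by rw [hydef]; ring
      have hfloor : ⌊x⁻¹⌋₊ = a := by
        rw [Nat.floor_eq_iff (by rw [hinv]; linarith [hymem.1])]
        rw [hinv]
        constructor
        · linarith [hymem.1]
        · push_cast; linarith [hymem.2]
      have hgm : gaussMap x = y := by
        unfold gaussMap Int.fract
        have hfl : (⌊x⁻¹⌋ : ℤ) = (a : ℤ) := by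
          rw [Int.floor_eq_iff, hinv]
          constructor
          · push_cast; linarith [hymem.1]
          · push_cast; linarith [hymem.2]
        rw [hfl, hinv]; push_cast; ring
      exact ⟨hxIoo, hfloor, by rw [hgm]; exact (ih hw' hyirr).mpr hyu⟩

lemma gaussMeasure_null {s : Set ℝ} (hs : volume s = 0) : gaussMeasure s = 0 := by
  have h1 : (volume.restrict (Set.Ioo (0:ℝ) 1)) s = 0 :=
    le_antisymm (le_trans (Measure.restrict_apply_le _ _) hs.le) (zero_le)
  exact MeasureTheory.withDensity_absolutelyContinuous _ _ h1

lemma ae_irrational : ∀ᵐ x ∂gaussMeasure, Irrational x := by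
  rw [ae_iff]
  apply gaussMeasure_null
  have h : {x : ℝ | ¬Irrational x} = Set.range ((↑) : ℚ → ℝ) := by
    ext x; simp [Irrational]
  rw [h]
  exact (Set.countable_range _).measure_zero _

lemma gaussMeasure_cylinder_eq (w : List ℕ) (hw : ∀ a ∈ w, 0 < a) :
    gaussMeasure (cylinder w) = gaussMeasure (Set.uIoo (fv w 0) (fv w 1)) := by
  apply measure_congr
  rw [Filter.eventuallyEq_set]
  filter_upwards [ae_irrational] with x hx
  exact mem_cylinder_iff w hw hx

lemma gaussMeasure_Ioo {α β : ℝ} (h0 : 0 ≤ α) (hab : α ≤ β) (h1 : β ≤ 1) :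
    gaussMeasure (Set.Ioo α β) =
      ENNReal.ofReal (Real.log ((1+β)/(1+α)) / Real.log 2) := by
  have hL : (0:ℝ) < Real.log 2 := Real.log_pos one_lt_two
  have hsub : Set.Ioo α β ⊆ Set.Ioo (0:ℝ) 1 := fun x hx =>
    ⟨lt_of_le_of_lt h0 hx.1, lt_of_lt_of_le hx.2 h1⟩
  rw [gaussMeasure, withDensity_apply _ measurableSet_Ioo,
    Measure.restrict_restrict measurableSet_Ioo, Set.inter_eq_left.mpr hsub]
  have hint : IntegrableOn (fun x => 1 / ((1+x) * Real.log 2)) (Set.Ioo α β) := by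
    apply (ContinuousOn.integrableOn_Icc ?_).mono_set Set.Ioo_subset_Icc_self
    apply ContinuousOn.div continuousOn_const (by fun_prop)
    intro x hx
    have hx0 : 0 ≤ x := le_trans h0 hx.1
    exact ne_of_gt (mul_pos (by linarith) hL)
  have hnn : 0 ≤ᵐ[volume.restrict (Set.Ioo α β)] fun x => 1 / ((1+x) * Real.log 2) := by
    filter_upwards [ae_restrict_mem measurableSet_Ioo] with x hx
    have hx0 : 0 ≤ x := le_trans h0 hx.1.le
    positivity
  rw [← MeasureTheory.ofReal_integral_eq_lintegral_ofReal hint hnn]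
  congr 1
  rw [← MeasureTheory.integral_Ioc_eq_integral_Ioo, ← intervalIntegral.integral_of_le hab]
  have he : ∀ x : ℝ, 1 / ((1+x) * Real.log 2) = (Real.log 2)⁻¹ * (1/(1+x)) := by
    intro x; rw [one_div, mul_inv, one_div, mul_comm]
  simp only [he]
  rw [intervalIntegral.integral_const_mul]
  have hc : (∫ x in α..β, 1/(1+x)) = ∫ x in (1+α)..(1+β), 1/x :=
    intervalIntegral.integral_comp_add_left (fun x => 1/x) 1
  rw [hc, integral_one_div, inv_mul_eq_div]
  intro hmem
  rcases Set.mem_uIcc.mp hmem with ⟨h', -⟩ | ⟨h', -⟩ <;> linarith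

lemma gaussMeasure_uIoo {α β : ℝ} (hα : α ∈ Set.Icc (0:ℝ) 1) (hβ : β ∈ Set.Icc (0:ℝ) 1) :
    gaussMeasure (Set.uIoo α β) =
      ENNReal.ofReal (|Real.log ((1+β)/(1+α))| / Real.log 2) := by
  rcases le_total α β with h | h
  · rw [Set.uIoo_of_le h, gaussMeasure_Ioo hα.1 h hβ.2]
    congr 2
    rw [abs_of_nonneg]
    apply Real.log_nonneg
    rw [le_div_iff₀ (by linarith [hα.1] : (0:ℝ) < 1+α)]
    linarith
  · rw [Set.uIoo_comm, Set.uIoo_of_le h, gaussMeasure_Ioo hβ.1 h hα.2]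
    congr 2
    have e : Real.log ((1+β)/(1+α)) = - Real.log ((1+α)/(1+β)) := by
      rw [← Real.log_inv, inv_div]
    rw [e, abs_neg, abs_of_nonneg]
    apply Real.log_nonneg
    rw [le_div_iff₀ (by linarith [hβ.1] : (0:ℝ) < 1+β)]
    linarith

lemma fv_zero_eq (w : List ℕ) : fv w 0 = (cfMat w 0 1 : ℝ) / (cfMat w 1 1 : ℝ) := by
  simp [fv]

lemma fv_one_eq (w : List ℕ) :
    fv w 1 = ((cfMat w 0 0 : ℝ) + cfMat w 0 1) / ((cfMat w 1 0 : ℝ) + cfMat w 1 1) := by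
  simp [fv]

theorem gauss_measure_cylinder_reverse (w : List ℕ) (hw : ∀ a ∈ w, 0 < a) :
    gaussMeasure (cylinder w) = gaussMeasure (cylinder w.reverse) := by
  have hw' : ∀ a ∈ w.reverse, 0 < a := fun a haa => hw a (List.mem_reverse.mp haa)
  have m1 : fv w 0 ∈ Set.Icc (0:ℝ) 1 :=
    ⟨fv_nonneg w hw le_rfl, fv_le_one w hw ⟨le_rfl, zero_le_one⟩⟩
  have m2 : fv w 1 ∈ Set.Icc (0:ℝ) 1 :=
    ⟨fv_nonneg w hw zero_le_one, fv_le_one w hw ⟨zero_le_one, le_rfl⟩⟩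
  have m3 : fv w.reverse 0 ∈ Set.Icc (0:ℝ) 1 :=
    ⟨fv_nonneg _ hw' le_rfl, fv_le_one _ hw' ⟨le_rfl, zero_le_one⟩⟩
  have m4 : fv w.reverse 1 ∈ Set.Icc (0:ℝ) 1 :=
    ⟨fv_nonneg _ hw' zero_le_one, fv_le_one _ hw' ⟨zero_le_one, le_rfl⟩⟩
  rw [gaussMeasure_cylinder_eq w hw, gaussMeasure_cylinder_eq w.reverse hw',
    gaussMeasure_uIoo m1 m2, gaussMeasure_uIoo m3 m4]
  have hr : (1 + fv w.reverse 1) / (1 + fv w.reverse 0) = (1 + fv w 1) / (1 + fv w 0) := by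
    obtain ⟨hBD, hABCD, hD⟩ := cfMat_bounds w hw
    rw [fv_zero_eq, fv_one_eq, fv_zero_eq, fv_one_eq, cfMat_reverse]
    simp only [Matrix.transpose_apply]
    have hD' : (1:ℝ) ≤ (cfMat w 1 1 : ℝ) := by exact_mod_cast hD
    have hA : (0:ℝ) ≤ (cfMat w 0 0 : ℝ) := by positivity
    have hB : (0:ℝ) ≤ (cfMat w 0 1 : ℝ) := by positivity
    have hC : (0:ℝ) ≤ (cfMat w 1 0 : ℝ) := by positivity
    have h1 : (cfMat w 1 1 : ℝ) ≠ 0 := by linarith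
    have h2 : (cfMat w 0 1 : ℝ) + (cfMat w 1 1 : ℝ) ≠ 0 := by linarith
    have h3 : (cfMat w 1 0 : ℝ) + (cfMat w 1 1 : ℝ) ≠ 0 := by linarith
    field_simp
    ring
  rw [hr]
end

section
/- Let k ≥ 1 and let n₁, …, n_k be positive integers with n_k > 1. Then the denominator (in lowest terms) of the finite continued fraction [0; 1, 1, n₁, …, n_k] is strictly greater than the denominator of [0; 1, n₁, …, n_k, 1]. -/
open MeasureTheory Filter

/-- Continuant -/
def K : List ℕ → ℕ
  | [] => 1
  | [a] => a
  | a :: b :: t => a * K (b :: t) + K t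

/-- Continuant of `dropLast` (junk value 0 at `[]`). -/
def Kd : List ℕ → ℕ
  | [] => 0
  | [_] => 1
  | a :: b :: t => a * Kd (b :: t) + Kd t

/-- Continuant of the tail (junk value 0 at `[]`). -/
def Kt : List ℕ → ℕ
  | [] => 0
  | _ :: t => K t

lemma Kcons (a : ℕ) (t : List ℕ) : K (a :: t) = a * K t + Kt t := by
  cases t <;> simp [K, Kt]

lemma Kpos (l : List ℕ) (h : ∀ a ∈ l, 0 < a) : 1 ≤ K l := by
  induction l using K.induct with
  | case1 => simp [K]
  | case2 a => exact Nat.succ_le_of_lt (h a (by simp))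
  | case3 a b t ih1 ih2 =>
    have ha : 1 ≤ a := h a (by simp)
    have h1 := ih1 (fun x hx => h x (List.mem_cons_of_mem a hx))
    show 1 ≤ a * K (b :: t) + K t
    nlinarith

lemma Kdpos (a : ℕ) (l : List ℕ) (h : ∀ x ∈ a :: l, 0 < x) : 1 ≤ Kd (a :: l) := by
  induction l using K.induct generalizing a with
  | case1 => simp [Kd]
  | case2 b =>
    have ha : 1 ≤ a := h a (by simp)
    show 1 ≤ a * Kd [b] + Kd []
    simp [Kd]; omega
  | case3 b c t ih1 ih2 =>
    have h2 := ih2 c (fun x hx => h x (by simp at hx ⊢; tauto))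
    show 1 ≤ a * Kd (b :: c :: t) + Kd (c :: t)
    exact h2.trans (Nat.le_add_left _ _)

lemma Kt_le (l : List ℕ) (h : ∀ a ∈ l, 0 < a) : Kt l ≤ K l := by
  cases l with
  | nil => simp [Kt, K]
  | cons a t =>
    have ha : 1 ≤ a := h a (by simp)
    rw [Kcons]
    calc Kt (a :: t) = K t := rfl
    _ ≤ a * K t + Kt t := by nlinarith

lemma Kapp (l : List ℕ) (x : ℕ) :
    K (l ++ [x]) = x * K l + Kd l ∧ Kd (l ++ [x]) = K l := by
  induction l using K.induct with
  | case1 => simp [K, Kd]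
  | case2 a => simp [K, Kd]; ring
  | case3 a b t ih1 ih2 =>
    constructor
    · show a * K (b :: (t ++ [x])) + K (t ++ [x])
        = x * (a * K (b :: t) + K t) + (a * Kd (b :: t) + Kd t)
      rw [show b :: (t ++ [x]) = (b :: t) ++ [x] from rfl, ih1.1, ih2.1]
      ring
    · show a * Kd (b :: (t ++ [x])) + Kd (t ++ [x]) = a * K (b :: t) + K t
      rw [show b :: (t ++ [x]) = (b :: t) ++ [x] from rfl, ih1.2, ih2.2]

lemma cfVal_num_den (l : List ℕ) (h : ∀ a ∈ l, 0 < a) :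
    (cfVal l).den = K l ∧ (cfVal l).num = Kt l := by
  induction l with
  | nil => simp [cfVal, K, Kt]
  | cons a t ih =>
    have ht : ∀ x ∈ t, 0 < x := fun x hx => h x (List.mem_cons_of_mem a hx)
    obtain ⟨hden, hnum⟩ := ih ht
    have ha : 1 ≤ a := h a (by simp)
    have hq : 1 ≤ K t := Kpos t ht
    set r := cfVal t with hr
    have hKne : (K t : ℚ) ≠ 0 := by
      exact_mod_cast Nat.one_le_iff_ne_zero.mp hq
    have hBposN : 0 < a * K t + Kt t := by positivity
    have hB : ((a : ℚ) * (K t : ℚ) + (Kt t : ℚ)) ≠ 0 := by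
      have : ((0:ℕ) : ℚ) < ((a * K t + Kt t : ℕ) : ℚ) := by exact_mod_cast hBposN
      push_cast at this
      linarith
    have key : cfVal (a :: t) = ((K t : ℚ)) / ((a : ℚ) * (K t : ℚ) + (Kt t : ℚ)) := by
      have hrval : r = (Kt t : ℚ) / (K t : ℚ) := by
        conv_lhs => rw [← Rat.num_div_den r]
        rw [hnum, hden]
        norm_cast
      show 1 / ((a : ℚ) + r) = _
      rw [hrval]
      field_simp
    have key2 : cfVal (a :: t) =
        (((K t : ℕ) : ℤ) : ℚ) / ((((a * K t + Kt t : ℕ) : ℤ)) : ℚ) := by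
      rw [key]; push_cast; ring_nf
    have hb' : (0:ℤ) < ((a * K t + Kt t : ℕ) : ℤ) := by exact_mod_cast hBposN
    have hcop : Nat.Coprime (((K t : ℕ) : ℤ)).natAbs ((((a * K t + Kt t : ℕ) : ℤ))).natAbs := by
      rw [Int.natAbs_natCast, Int.natAbs_natCast]
      have hred : Nat.Coprime (Kt t) (K t) := by
        have := r.reduced
        rwa [hnum, hden, Int.natAbs_natCast] at this
      have h2 : Nat.Coprime (K t) (Kt t + K t * a) := (Nat.coprime_add_mul_left_right (K t) (Kt t) a).mpr hred.symm
      rwa [show Kt t + K t * a = a * K t + Kt t by ring] at h2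
    constructor
    · have hd := Rat.den_div_eq_of_coprime hb' hcop
      rw [← key2] at hd
      rw [Kcons]
      exact_mod_cast hd
    · have hn := Rat.num_div_eq_of_coprime hb' hcop
      rw [← key2] at hn
      rw [show Kt (a :: t) = K t from rfl]
      exact_mod_cast hn

theorem denom_compare (k : ℕ) (hk : 1 ≤ k) (n : ℕ → ℕ)
    (hpos : ∀ i, 1 ≤ i → i ≤ k → 0 < n i) (hlast : 1 < n k) :
    (cfVal (1 :: 1 :: List.ofFn (fun i : Fin k => n (i + 1)))).den >
      (cfVal ((1 :: List.ofFn (fun i : Fin k => n (i + 1))) ++ [1])).den := by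
  obtain ⟨m, rfl⟩ : ∃ m, k = m + 1 := ⟨k - 1, by omega⟩
  set L : List ℕ := List.ofFn (fun i : Fin (m + 1) => n (i + 1)) with hL
  have hLpos : ∀ a ∈ L, 0 < a := by
    intro a haL
    rw [hL, List.mem_ofFn] at haL
    obtain ⟨i, rfl⟩ := haL
    exact hpos _ (by omega) (by omega)
  have h1 : ∀ a ∈ (1 : ℕ) :: 1 :: L, 0 < a := by
    intro a ha; simp only [List.mem_cons] at ha
    rcases ha with h | h | h
    · omega
    · omega
    · exact hLpos a h
  have h2 : ∀ a ∈ ((1 : ℕ) :: L) ++ [1], 0 < a := by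
    intro a ha
    rcases List.mem_append.mp ha with h | h
    · rcases List.mem_cons.mp h with rfl | h
      · omega
      · exact hLpos a h
    · simp at h; omega
  rw [(cfVal_num_den _ h1).1, (cfVal_num_den _ h2).1]
  obtain ⟨M, hsplit, hMpos⟩ :
      ∃ M : List ℕ, L = M ++ [n (m + 1)] ∧ ∀ a ∈ M, 0 < a := by
    refine ⟨List.ofFn (fun i : Fin m => n (i.castSucc + 1)), ?_, ?_⟩
    · rw [hL, List.ofFn_succ']
      simp [List.concat_eq_append, Fin.last]
    · intro a haM
      rw [List.mem_ofFn] at haM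
      obtain ⟨i, rfl⟩ := haM
      exact hpos _ (by omega) (by omega)
  have hc : 2 ≤ n (m + 1) := hlast
  have key : K (1 :: M) < K L := by
    rw [hsplit, (Kapp M (n (m + 1))).1, Kcons]
    rcases M with _ | ⟨b, t⟩
    · show 1 * K [] + Kt [] < _
      simp [K, Kd, Kt]
      omega
    · have hKd : 1 ≤ Kd (b :: t) := Kdpos b t hMpos
      have hKt : Kt (b :: t) ≤ K (b :: t) := Kt_le (b :: t) hMpos
      have hKM : 1 ≤ K (b :: t) := Kpos (b :: t) hMpos
      nlinarith
  have e1 : K (1 :: 1 :: L) = 1 * K (1 :: L) + K L := rfl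
  have e2 : K ((1 :: L) ++ [1]) = 1 * K (1 :: L) + Kd (1 :: L) := (Kapp (1 :: L) 1).1
  have e3 : Kd (1 :: L) = K (1 :: M) := by
    rw [hsplit, show (1 : ℕ) :: (M ++ [n (m + 1)]) = (1 :: M) ++ [n (m + 1)] from rfl,
      (Kapp (1 :: M) (n (m + 1))).2]
  omega
end
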